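/- Let (B, *_λ, α, β) be a regular BiHom-preLie conformal algebra. Define the λ-bracket [x_λ y] = x *_λ y − α⁻¹β(y) *_{−∂−λ} αβ⁻¹(x). Then (B, [·_λ·], α, β) is a BiHom-Lie conformal algebra (the sub-adjacent BiHom-Lie conformal algebra of (B, *_λ, α, β)). -/
import Mathlib


/-!
Common framework: conformal λ-maps over ℂ[∂]-modules, recorded by the
coefficients of their λ-expansion, together with evaluation at a complex
number λ and "evaluation at −∂−λ".
-/

namespace ConfAlg

/-- A conformal λ-map from `B` to conformal operators on `M`: the value
`x *_λ m` is the polynomial `∑ₙ λⁿ • (coef n)` recorded as a finitely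
supported family of coefficients, ℂ-bilinear in `x` and `m`. -/
abbrev CMap (B M : Type) [AddCommGroup B] [Module ℂ B]
    [AddCommGroup M] [Module ℂ M] :=
  B →ₗ[ℂ] M →ₗ[ℂ] (ℕ →₀ M)

section Defs

variable {B M : Type} [AddCommGroup B] [Module ℂ B] [AddCommGroup M] [Module ℂ M]

/-- Evaluation of a conformal λ-map at a complex number `l`. -/
noncomputable def ev (f : CMap B M) (l : ℂ) (x : B) (m : M) : M :=
  (f x m).sum fun n b => l ^ n • b

/-- Evaluation of a conformal λ-map at `−∂−l`: the operator `(−∂−l)ⁿ`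
is applied to the `n`-th coefficient, where `∂` acts on `M` via `DM`. -/
noncomputable def evD (DM : Module.End ℂ M) (f : CMap B M) (l : ℂ) (x : B) (m : M) : M :=
  (f x m).sum fun n b => ((-DM - l • (1 : Module.End ℂ M)) ^ n) b

/-- Conformal sesquilinearity: `(∂x)_λ m = −λ (x_λ m)` and
`x_λ (∂m) = (∂+λ)(x_λ m)`. -/
def Sesq (D : Module.End ℂ B) (DM : Module.End ℂ M) (f : CMap B M) : Prop :=
  (∀ (l : ℂ) (x : B) (m : M), ev f l (D x) m = (-l) • ev f l x m) ∧
  (∀ (l : ℂ) (x : B) (m : M), ev f l x (DM m) = DM (ev f l x m) + l • ev f l x m)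

end Defs

/-- The data of a (BiHom-associative) conformal algebra: the action of `∂`,
a conformal λ-product, and two structure maps. -/
structure AssocData (B : Type) [AddCommGroup B] [Module ℂ B] where
  D : Module.End ℂ B
  mul : CMap B B
  α : Module.End ℂ B
  β : Module.End ℂ B

namespace AssocData

variable {B : Type} [AddCommGroup B] [Module ℂ B]

/-- `(B, *_λ, α, β)` is a BiHom-associative conformal algebra. -/
def IsAssoc (A : AssocData B) : Prop :=
  A.α ∘ₗ A.D = A.D ∘ₗ A.α ∧ A.β ∘ₗ A.D = A.D ∘ₗ A.β ∧ A.α ∘ₗ A.β = A.β ∘ₗ A.α ∧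
  Sesq A.D A.D A.mul ∧
  ∀ (l μ : ℂ) (x y z : B),
    ev A.mul l (A.α x) (ev A.mul μ y z) = ev A.mul (l + μ) (ev A.mul l x y) (A.β z)

/-- Commutativity: `x *_λ y = y *_{−∂−λ} x`. -/
def IsComm (A : AssocData B) : Prop :=
  ∀ (l : ℂ) (x y : B), ev A.mul l x y = evD A.D A.mul l y x

/-- Multiplicativity of the structure maps. -/
def IsMult (A : AssocData B) : Prop :=
  (∀ (l : ℂ) (x y : B), A.α (ev A.mul l x y) = ev A.mul l (A.α x) (A.α y)) ∧
  (∀ (l : ℂ) (x y : B), A.β (ev A.mul l x y) = ev A.mul l (A.β x) (A.β y))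

end AssocData

/-- The data of a (BiHom-Lie) conformal algebra. -/
structure LieData (B : Type) [AddCommGroup B] [Module ℂ B] where
  D : Module.End ℂ B
  br : CMap B B
  α : Module.End ℂ B
  β : Module.End ℂ B

namespace LieData

variable {B : Type} [AddCommGroup B] [Module ℂ B]

/-- `(B, [·_λ·], α, β)` is a BiHom-Lie conformal algebra. -/
def IsLie (L : LieData B) : Prop :=
  L.α ∘ₗ L.D = L.D ∘ₗ L.α ∧ L.β ∘ₗ L.D = L.D ∘ₗ L.β ∧ L.α ∘ₗ L.β = L.β ∘ₗ L.α ∧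
  Sesq L.D L.D L.br ∧
  (∀ (l : ℂ) (x y : B),
    ev L.br l (L.β x) (L.α y) = - evD L.D L.br l (L.β y) (L.α x)) ∧
  ∀ (l μ : ℂ) (x y z : B),
    ev L.br l (L.α (L.β x)) (ev L.br μ y z)
      = ev L.br (l + μ) (ev L.br l (L.β x) y) (L.β z)
        + ev L.br μ (L.β y) (ev L.br l (L.α x) z)

/-- Multiplicativity of the structure maps. -/
def IsMult (L : LieData B) : Prop :=
  (∀ (l : ℂ) (x y : B), L.α (ev L.br l x y) = ev L.br l (L.α x) (L.α y)) ∧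
  (∀ (l : ℂ) (x y : B), L.β (ev L.br l x y) = ev L.br l (L.β x) (L.β y))

end LieData

/-- The data of a (BiHom-)Poisson conformal algebra. -/
structure PoissonData (B : Type) [AddCommGroup B] [Module ℂ B] where
  D : Module.End ℂ B
  mul : CMap B B
  br : CMap B B
  α : Module.End ℂ B
  β : Module.End ℂ B

namespace PoissonData

variable {B : Type} [AddCommGroup B] [Module ℂ B]

def toAssoc (P : PoissonData B) : AssocData B := ⟨P.D, P.mul, P.α, P.β⟩

def toLie (P : PoissonData B) : LieData B := ⟨P.D, P.br, P.α, P.β⟩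

/-- The BiHom-Leibniz identity
`[αβ(x)_λ (y *_μ z)] = [β(x)_λ y] *_{λ+μ} β(z) + β(y) *_μ [α(x)_λ z]`. -/
def Leibniz (P : PoissonData B) : Prop :=
  ∀ (l μ : ℂ) (x y z : B),
    ev P.br l (P.α (P.β x)) (ev P.mul μ y z)
      = ev P.mul (l + μ) (ev P.br l (P.β x) y) (P.β z)
        + ev P.mul μ (P.β y) (ev P.br l (P.α x) z)

/-- `(B, *_λ, [·_λ·], α, β)` is a BiHom-Poisson conformal algebra. -/
def IsPoisson (P : PoissonData B) : Prop :=
  P.toAssoc.IsAssoc ∧ P.toAssoc.IsComm ∧ P.toLie.IsLie ∧ P.Leibniz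

/-- A noncommutative BiHom-Poisson conformal algebra (commutativity of `*_λ`
is not required). -/
def IsNCPoisson (P : PoissonData B) : Prop :=
  P.toAssoc.IsAssoc ∧ P.toLie.IsLie ∧ P.Leibniz

/-- Multiplicativity of the structure maps with respect to both products. -/
def IsMult (P : PoissonData B) : Prop :=
  P.toAssoc.IsMult ∧ P.toLie.IsMult

end PoissonData

/-- The data of a BiHom-dendriform conformal algebra; `lt` is `≺`, `gt` is `≻`. -/
structure DendData (B : Type) [AddCommGroup B] [Module ℂ B] where
  D : Module.End ℂ B
  lt : CMap B B
  gt : CMap B B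
  α : Module.End ℂ B
  β : Module.End ℂ B

namespace DendData

variable {B : Type} [AddCommGroup B] [Module ℂ B]

/-- `(B, ≺_λ, ≻_λ, α, β)` is a BiHom-dendriform conformal algebra. -/
def IsDend (Dd : DendData B) : Prop :=
  Dd.α ∘ₗ Dd.D = Dd.D ∘ₗ Dd.α ∧ Dd.β ∘ₗ Dd.D = Dd.D ∘ₗ Dd.β ∧
  Dd.α ∘ₗ Dd.β = Dd.β ∘ₗ Dd.α ∧
  Sesq Dd.D Dd.D Dd.lt ∧ Sesq Dd.D Dd.D Dd.gt ∧
  (∀ (l : ℂ) (x y : B), Dd.α (ev Dd.lt l x y) = ev Dd.lt l (Dd.α x) (Dd.α y)) ∧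
  (∀ (l : ℂ) (x y : B), Dd.α (ev Dd.gt l x y) = ev Dd.gt l (Dd.α x) (Dd.α y)) ∧
  (∀ (l : ℂ) (x y : B), Dd.β (ev Dd.lt l x y) = ev Dd.lt l (Dd.β x) (Dd.β y)) ∧
  (∀ (l : ℂ) (x y : B), Dd.β (ev Dd.gt l x y) = ev Dd.gt l (Dd.β x) (Dd.β y)) ∧
  (∀ (l μ : ℂ) (x y z : B),
    ev Dd.lt (l + μ) (ev Dd.lt l x y) (Dd.β z)
      = ev Dd.lt l (Dd.α x) (ev Dd.lt μ y z + ev Dd.gt μ y z)) ∧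
  (∀ (l μ : ℂ) (x y z : B),
    ev Dd.lt (l + μ) (ev Dd.gt l x y) (Dd.β z)
      = ev Dd.gt l (Dd.α x) (ev Dd.lt μ y z)) ∧
  ∀ (l μ : ℂ) (x y z : B),
    ev Dd.gt l (Dd.α x) (ev Dd.gt μ y z)
      = ev Dd.gt (l + μ) (ev Dd.lt l x y + ev Dd.gt l x y) (Dd.β z)

end DendData

/-- The data of a BiHom-preLie conformal algebra. -/
structure PreLieData (B : Type) [AddCommGroup B] [Module ℂ B] where
  D : Module.End ℂ B
  mul : CMap B B
  α : Module.End ℂ B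
  β : Module.End ℂ B

namespace PreLieData

variable {B : Type} [AddCommGroup B] [Module ℂ B]

/-- `(B, *_λ, α, β)` is a BiHom-preLie conformal algebra. -/
def IsPreLie (P : PreLieData B) : Prop :=
  P.α ∘ₗ P.D = P.D ∘ₗ P.α ∧ P.β ∘ₗ P.D = P.D ∘ₗ P.β ∧ P.α ∘ₗ P.β = P.β ∘ₗ P.α ∧
  Sesq P.D P.D P.mul ∧
  (∀ (l : ℂ) (x y : B), P.α (ev P.mul l x y) = ev P.mul l (P.α x) (P.α y)) ∧
  (∀ (l : ℂ) (x y : B), P.β (ev P.mul l x y) = ev P.mul l (P.β x) (P.β y)) ∧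
  ∀ (l μ : ℂ) (x y z : B),
    ev P.mul (l + μ) (ev P.mul l (P.β x) (P.α y)) (P.β z)
        - ev P.mul l (P.α (P.β x)) (ev P.mul μ (P.α y) z)
      = ev P.mul (l + μ) (ev P.mul μ (P.β y) (P.α x)) (P.β z)
        - ev P.mul μ (P.α (P.β y)) (ev P.mul l (P.α x) z)

end PreLieData

/-- The data of a BiHom-pre-Poisson conformal algebra. -/
structure PrePoissonData (B : Type) [AddCommGroup B] [Module ℂ B] where
  D : Module.End ℂ B
  lt : CMap B B
  gt : CMap B B
  star : CMap B B
  α : Module.End ℂ B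
  β : Module.End ℂ B

namespace PrePoissonData

variable {B : Type} [AddCommGroup B] [Module ℂ B]

def toDend (P : PrePoissonData B) : DendData B := ⟨P.D, P.lt, P.gt, P.α, P.β⟩

def toPreLie (P : PrePoissonData B) : PreLieData B := ⟨P.D, P.star, P.α, P.β⟩

/-- `(B, ≺_λ, ≻_λ, *_λ, α, β)` is a BiHom-pre-Poisson conformal algebra. -/
def IsPrePoisson (P : PrePoissonData B) : Prop :=
  P.toDend.IsDend ∧ P.toPreLie.IsPreLie ∧
  (∀ (l μ : ℂ) (x y z : B),
    ev P.lt (l + μ)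
        (ev P.star l (P.β x) (P.α y) - evD P.D P.star l (P.β y) (P.α x)) (P.β z)
      = ev P.star l (P.α (P.β x)) (ev P.lt μ (P.α y) z)
        - ev P.lt μ (P.α (P.β y)) (ev P.star l (P.α x) z)) ∧
  (∀ (l μ : ℂ) (x y z : B),
    ev P.gt l (P.β x)
        (ev P.star μ (P.α (P.β y)) (P.α z) - evD P.D P.star μ (P.β z) (P.α (P.α y)))
      = ev P.star μ (P.α (P.β (P.β y))) (ev P.gt l x (P.α z))
        - ev P.gt (l + μ) (ev P.star μ (P.β (P.β y)) x) (P.α (P.β z))) ∧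
  ∀ (l μ : ℂ) (x y z : B),
    ev P.star (l + μ) (ev P.lt l (P.β x) (P.α y) + ev P.gt l (P.β x) (P.α y)) (P.β z)
      = evD P.D P.gt μ (ev P.star l (P.β x) (P.α z)) (P.β y)
        + ev P.lt l (P.α (P.β x)) (ev P.star μ (P.α y) z)

end PrePoissonData

section Reps

variable {B M : Type} [AddCommGroup B] [Module ℂ B] [AddCommGroup M] [Module ℂ M]

/-- `(M, l, r, φ, ψ)` is a conformal representation of the BiHom-associative
conformal algebra `A`. -/
def IsAssocRep (A : AssocData B) (DM φ ψ : Module.End ℂ M) (lA rA : CMap B M) : Prop :=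
  φ ∘ₗ DM = DM ∘ₗ φ ∧ ψ ∘ₗ DM = DM ∘ₗ ψ ∧
  Sesq A.D DM lA ∧ Sesq A.D DM rA ∧
  (∀ (l : ℂ) (x : B) (m : M), φ (ev lA l x m) = ev lA l (A.α x) (φ m)) ∧
  (∀ (l : ℂ) (x : B) (m : M), φ (ev rA l x m) = ev rA l (A.α x) (φ m)) ∧
  (∀ (l : ℂ) (x : B) (m : M), ψ (ev lA l x m) = ev lA l (A.β x) (ψ m)) ∧
  (∀ (l : ℂ) (x : B) (m : M), ψ (ev rA l x m) = ev rA l (A.β x) (ψ m)) ∧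
  (∀ (l μ : ℂ) (x y : B) (m : M),
    ev lA (l + μ) (ev A.mul l x y) (ψ m) = ev lA l (A.α x) (ev lA μ y m)) ∧
  (∀ (l μ : ℂ) (x y : B) (m : M),
    ev rA (l + μ) (ev A.mul l x y) (φ m) = ev rA l (A.β y) (ev rA μ x m)) ∧
  ∀ (l μ : ℂ) (x y : B) (m : M),
    ev lA l (A.α x) (ev rA μ y m) = ev rA μ (A.β y) (ev lA l x m)

/-- `(M, ρ, φ, ψ)` is a conformal representation of the BiHom-Lie conformal
algebra `L`. -/
def IsLieRep (L : LieData B) (DM φ ψ : Module.End ℂ M) (ρ : CMap B M) : Prop :=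
  φ ∘ₗ DM = DM ∘ₗ φ ∧ ψ ∘ₗ DM = DM ∘ₗ ψ ∧
  Sesq L.D DM ρ ∧
  (∀ (l : ℂ) (x : B) (m : M), φ (ev ρ l x m) = ev ρ l (L.α x) (φ m)) ∧
  (∀ (l : ℂ) (x : B) (m : M), ψ (ev ρ l x m) = ev ρ l (L.β x) (ψ m)) ∧
  ∀ (l μ : ℂ) (x y : B) (m : M),
    ev ρ (l + μ) (ev L.br l (L.β x) y) (ψ m)
      = ev ρ l (L.α (L.β x)) (ev ρ μ y m) - ev ρ μ (L.β y) (ev ρ l (L.α x) m)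

/-- `(M, l, r, ρ, φ, ψ)` is a conformal representation of the BiHom-Poisson
conformal algebra `P`. -/
def IsPoissonRep (P : PoissonData B) (DM φ ψ : Module.End ℂ M)
    (lA rA ρ : CMap B M) : Prop :=
  IsAssocRep P.toAssoc DM φ ψ lA rA ∧ IsLieRep P.toLie DM φ ψ ρ ∧
  (∀ (l μ : ℂ) (x y : B) (m : M),
    ev lA (l + μ) (ev P.br l (P.β x) y) (ψ m)
      = ev ρ l (P.α (P.β x)) (ev lA μ y m) - ev lA μ (P.β y) (ev ρ l (P.α x) m)) ∧
  (∀ (l μ : ℂ) (x y : B) (m : M),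
    ev rA (l + μ) (ev P.br l (P.α x) y) (ψ m)
      = ev ρ l (P.α (P.β x)) (ev rA μ y m) - ev rA μ (P.β y) (ev ρ l (P.β x) m)) ∧
  ∀ (l μ : ℂ) (x y : B) (m : M),
    ev ρ (l + μ) (ev P.mul l x y) (φ (ψ m))
      = ev lA l (P.α x) (ev ρ μ y (φ m)) - ev lA μ (P.α y) (ev ρ l x (ψ m))

/-- `(M, l_*, r_*, φ, ψ)` is a conformal representation of the BiHom-preLie
conformal algebra `P`. -/
def IsPreLieRep (P : PreLieData B) (DM φ ψ : Module.End ℂ M)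
    (lS rS : CMap B M) : Prop :=
  φ ∘ₗ DM = DM ∘ₗ φ ∧ ψ ∘ₗ DM = DM ∘ₗ ψ ∧
  Sesq P.D DM lS ∧ Sesq P.D DM rS ∧
  (∀ (l : ℂ) (x : B) (m : M), φ (ev lS l x m) = ev lS l (P.α x) (φ m)) ∧
  (∀ (l : ℂ) (x : B) (m : M), φ (ev rS l x m) = ev rS l (P.α x) (φ m)) ∧
  (∀ (l : ℂ) (x : B) (m : M), ψ (ev lS l x m) = ev lS l (P.β x) (ψ m)) ∧
  (∀ (l : ℂ) (x : B) (m : M), ψ (ev rS l x m) = ev rS l (P.β x) (ψ m)) ∧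
  (∀ (l μ : ℂ) (x y : B) (m : M),
    ev lS (l + μ)
        (ev P.mul l (P.β x) (P.α y) - evD P.D P.mul l (P.β y) (P.α x)) (ψ m)
      = ev lS l (P.α (P.β x)) (ev lS μ (P.α y) m)
        - ev lS μ (P.α (P.β y)) (ev lS l (P.α x) m)) ∧
  ∀ (l μ : ℂ) (x y : B) (m : M),
    ev rS μ (P.β y) (ev lS l (P.β x) (φ m) - ev rS l (P.α x) (ψ m))
      = ev lS l (P.α (P.β x)) (ev rS μ y (φ m))
        - ev rS (l + μ) (ev P.mul l (P.α x) y) (φ (ψ m))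

end Reps

/-- A bundled ℂ[∂]-module (used to quantify over representation spaces). -/
structure RepModule where
  M : Type
  [grp : AddCommGroup M]
  [mod : Module ℂ M]

attribute [instance] RepModule.grp RepModule.mod

namespace Stmt9

variable {B : Type} [AddCommGroup B] [Module ℂ B]

local notation "V" => (ℕ →₀ B)

/-- evaluation of a coefficient family at an operator -/
noncomputable def E (T : Module.End ℂ B) : V →ₗ[ℂ] B :=
  Finsupp.lsum ℂ (fun n => T ^ n)

@[simp] lemma E_single (T : Module.End ℂ B) (n : ℕ) (b : B) :
    E T (Finsupp.single n b) = (T ^ n) b := by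
  simp [E]

lemma pow_comm_of_comm {M N : Type} [AddCommGroup M] [Module ℂ M]
    [AddCommGroup N] [Module ℂ N]
    {Φ : M →ₗ[ℂ] N} {S : Module.End ℂ M} {T : Module.End ℂ N}
    (h : Φ ∘ₗ S = T ∘ₗ Φ) (n : ℕ) :
    Φ ∘ₗ (S ^ n) = (T ^ n) ∘ₗ Φ := by
  induction n with
  | zero => ext b; simp
  | succ n ih =>
    rw [pow_succ', pow_succ', Module.End.mul_eq_comp, Module.End.mul_eq_comp,
      ← LinearMap.comp_assoc, h, LinearMap.comp_assoc, ih, ← LinearMap.comp_assoc]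

/-- key: `∑ₙ Tⁿ Φ(gₙ) = Φ (∑ₙ Sⁿ gₙ)` when `Φ S = T Φ`. -/
lemma lsum_pow_comm {T S Φ : Module.End ℂ B} (h : Φ ∘ₗ S = T ∘ₗ Φ) (g : V) :
    (Finsupp.lsum ℂ (fun n => (T ^ n) ∘ₗ Φ)) g = Φ (E S g) := by
  have : (Finsupp.lsum ℂ (fun n => (T ^ n) ∘ₗ Φ)) = Φ ∘ₗ E S := by
    apply Finsupp.lhom_ext
    intro n b
    have := congrArg (fun (f : Module.End ℂ B) => f b) (pow_comm_of_comm h n)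
    simpa using this.symm
  rw [this]; rfl

lemma E_lsum (T : Module.End ℂ B) (F : ℕ → B →ₗ[ℂ] V) (g : V) :
    E T ((Finsupp.lsum ℂ F) g) = (Finsupp.lsum ℂ (fun n => (E T).comp (F n))) g := by
  have : (E T).comp (Finsupp.lsum ℂ F) = Finsupp.lsum ℂ (fun n => (E T).comp (F n)) := by
    apply Finsupp.lhom_ext; intro n b; simp
  exact congrArg (fun (f : V →ₗ[ℂ] B) => f g) this

/-- shift: multiplication by λ -/
noncomputable def Xop : V →ₗ[ℂ] V :=
  Finsupp.lsum ℂ (fun n => Finsupp.lsingle (n + 1))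

@[simp] lemma Xop_single (n : ℕ) (b : B) :
    Xop (Finsupp.single n b) = Finsupp.single (n + 1) b := by simp [Xop]

lemma E_Xop (T : Module.End ℂ B) : E T ∘ₗ Xop = T ∘ₗ E T := by
  apply Finsupp.lhom_ext; intro n b
  simp [pow_succ']

/-- substitution operator -/
noncomputable def subst (Pm : V →ₗ[ℂ] V) : V →ₗ[ℂ] V :=
  Finsupp.lsum ℂ (fun n => (Pm ^ n) ∘ₗ Finsupp.lsingle 0)

lemma E_subst {T U : Module.End ℂ B} {Pm : V →ₗ[ℂ] V}
    (h : E T ∘ₗ Pm = U ∘ₗ E T) : E T ∘ₗ subst Pm = E U := by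
  apply Finsupp.lhom_ext; intro n b
  have hp : E T ∘ₗ (Pm ^ n) = (U ^ n) ∘ₗ E T := pow_comm_of_comm h n
  have := congrArg (fun (f : V →ₗ[ℂ] B) => f (Finsupp.single 0 b)) hp
  simp only [subst, LinearMap.comp_apply] at this ⊢
  simp only [Finsupp.lsum_single, LinearMap.comp_apply, Finsupp.lsingle_apply] at *
  rw [this]
  simp

/-- a coefficient family vanishing at all complex evaluations is zero -/
noncomputable def mapR (Φ : B →ₗ[ℂ] B) : (ℕ →₀ B) →ₗ[ℂ] (ℕ →₀ B) :=
  Finsupp.mapRange.linearMap Φ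

@[simp] lemma mapR_single (Φ : B →ₗ[ℂ] B) (n : ℕ) (b : B) :
    mapR Φ (Finsupp.single n b) = Finsupp.single n (Φ b) := by
  simp [mapR]

lemma E_mapR {T T' Φ : Module.End ℂ B} (h : Φ ∘ₗ T' = T ∘ₗ Φ) :
    E T ∘ₗ mapR Φ = Φ ∘ₗ E T' := by
  apply Finsupp.lhom_ext; intro n b
  have := congrArg (fun (f : Module.End ℂ B) => f b) (pow_comm_of_comm h n)
  simp only [LinearMap.comp_apply, mapR_single, E_single]
  simpa using this.symm

lemma mapR_mapR (Φ Ψ : B →ₗ[ℂ] B) (g : ℕ →₀ B) :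
    mapR Φ (mapR Ψ g) = mapR (Φ ∘ₗ Ψ) g := by
  have : (mapR Φ) ∘ₗ (mapR Ψ) = mapR (Φ ∘ₗ Ψ) := by
    apply Finsupp.lhom_ext; intro n b; simp
  exact congrArg (fun (f : (ℕ →₀ B) →ₗ[ℂ] (ℕ →₀ B)) => f g) this

@[simp] lemma mapR_one (g : ℕ →₀ B) : mapR (1 : Module.End ℂ B) g = g := by
  have : mapR (1 : Module.End ℂ B) = LinearMap.id := by
    apply Finsupp.lhom_ext; intro n b; simp
  rw [this]; rfl

lemma ev_inj {f : V} (h : ∀ l : ℂ, E ((l : ℂ) • (1 : Module.End ℂ B)) f = 0) :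
    f = 0 := by
  ext k
  rw [Finsupp.zero_apply, ← (Module.forall_dual_apply_eq_zero_iff ℂ (f k))]
  intro φ
  set p : Polynomial ℂ := f.sum (fun n b => Polynomial.C (φ b) * Polynomial.X ^ n) with hp
  have hev : ∀ l : ℂ, p.eval l = 0 := by
    intro l
    have h1 : p.eval l = f.sum (fun n b => φ b * l ^ n) := by
      rw [hp, Finsupp.sum, Finsupp.sum, Polynomial.eval_finset_sum]
      exact Finset.sum_congr rfl (fun n _ => by simp)
    have h2 : φ (E (l • (1 : Module.End ℂ B)) f) = f.sum (fun n b => φ b * l ^ n) := by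
      rw [E, Finsupp.lsum_apply, Finsupp.sum, map_sum]
      rw [Finsupp.sum]
      apply Finset.sum_congr rfl
      intro n _
      have : ((l • (1 : Module.End ℂ B)) ^ n) (f n) = l ^ n • f n := by
        rw [smul_pow, one_pow]; simp
      simp [Finsupp.lsum, this, map_smul, mul_comm]
    rw [h1, ← h2, h l, map_zero]
  have hp0 : p = 0 := by
    apply Polynomial.funext; intro r; simp [hev r]
  have hc : p.coeff k = φ (f k) := by
    rw [hp]
    classical
    rw [Finsupp.sum, Polynomial.finset_sum_coeff]
    have : ∀ n ∈ f.support, (Polynomial.C (φ (f n)) * Polynomial.X ^ n).coeff k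
        = if n = k then φ (f n) else 0 := by
      intro n _
      rw [Polynomial.coeff_C_mul, Polynomial.coeff_X_pow]
      by_cases hnk : k = n <;> simp [hnk, eq_comm]
    rw [Finset.sum_congr rfl this]
    by_cases hk : k ∈ f.support
    · rw [Finset.sum_ite_eq' f.support k (fun n => φ (f n))]
      simp [hk]
    · have : φ (f k) = 0 := by
        simp [Finsupp.notMem_support_iff.mp hk]
      rw [this]
      apply Finset.sum_eq_zero
      intro n hn
      have : n ≠ k := fun e => hk (e ▸ hn)
      simp [this]
  rw [hp0] at hc
  simpa using hc.symm

lemma ev_inj' {f g : V}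
    (h : ∀ l : ℂ, E ((l : ℂ) • (1 : Module.End ℂ B)) f
      = E ((l : ℂ) • (1 : Module.End ℂ B)) g) : f = g := by
  have := ev_inj (f := f - g) (fun l => by rw [map_sub, h l, sub_self])
  exact sub_eq_zero.mp this

variable {M : Type} [AddCommGroup M] [Module ℂ M]

lemma ev_eq_E (f : CMap B B) (l : ℂ) (x y : B) :
    ev f l x y = E (l • (1 : Module.End ℂ B)) (f x y) := by
  rw [ev, E, Finsupp.lsum_apply]
  apply Finsupp.sum_congr
  intro n _
  rw [smul_pow, one_pow]
  simp

lemma evD_eq_E (D : Module.End ℂ B) (f : CMap B B) (l : ℂ) (x y : B) :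
    evD D f l x y = E (-D - l • (1 : Module.End ℂ B)) (f x y) := by
  rw [evD, E, Finsupp.lsum_apply]

section Main

variable (P : PreLieData B) (α' β' : Module.End ℂ B)

lemma comp_apply' {f g : Module.End ℂ B} (h : f ∘ₗ g = 1) (b : B) : f (g b) = b := by
  have := congrArg (fun k : Module.End ℂ B => k b) h
  simpa using this

lemma comm_apply {f g : Module.End ℂ B} (h : f ∘ₗ g = g ∘ₗ f) (b : B) :
    f (g b) = g (f b) := by
  have := congrArg (fun k : Module.End ℂ B => k b) h
  simpa using this

lemma inv_comm {a a' Y : Module.End ℂ B} (h1 : a' ∘ₗ a = 1) (h2 : a ∘ₗ a' = 1)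
    (h : a ∘ₗ Y = Y ∘ₗ a) : a' ∘ₗ Y = Y ∘ₗ a' := by
  ext b
  simp only [LinearMap.comp_apply]
  have h3 : a (Y (a' b)) = Y (a (a' b)) := comm_apply h (a' b)
  rw [comp_apply' h2] at h3
  calc a' (Y b) = a' (a (Y (a' b))) := by rw [h3]
  _ = Y (a' b) := comp_apply' h1 _

lemma hα'D (hP : P.IsPreLie) (hα1 : α' ∘ₗ P.α = 1) (hα2 : P.α ∘ₗ α' = 1) :
    α' ∘ₗ P.D = P.D ∘ₗ α' := inv_comm hα1 hα2 hP.1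
lemma hβ'D (hP : P.IsPreLie) (hβ1 : β' ∘ₗ P.β = 1) (hβ2 : P.β ∘ₗ β' = 1) :
    β' ∘ₗ P.D = P.D ∘ₗ β' := inv_comm hβ1 hβ2 hP.2.1
lemma hα'β (hP : P.IsPreLie) (hα1 : α' ∘ₗ P.α = 1) (hα2 : P.α ∘ₗ α' = 1) :
    α' ∘ₗ P.β = P.β ∘ₗ α' := inv_comm hα1 hα2 hP.2.2.1
lemma hβ'α (hP : P.IsPreLie) (hβ1 : β' ∘ₗ P.β = 1) (hβ2 : P.β ∘ₗ β' = 1) :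
    β' ∘ₗ P.α = P.α ∘ₗ β' := inv_comm hβ1 hβ2 hP.2.2.1.symm
lemma hα'β' (hP : P.IsPreLie) (hα1 : α' ∘ₗ P.α = 1) (hα2 : P.α ∘ₗ α' = 1)
    (hβ1 : β' ∘ₗ P.β = 1) (hβ2 : P.β ∘ₗ β' = 1) : α' ∘ₗ β' = β' ∘ₗ α' :=
  inv_comm hα1 hα2 ((hβ'α P β' hP hβ1 hβ2).symm)

lemma c1 (hP : P.IsPreLie) (x y : B) : P.mul (P.D x) y = - Xop (P.mul x y) := by
  apply ev_inj'
  intro l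
  rw [map_neg]
  have h1 := hP.2.2.2.1.1 l x y
  rw [ev_eq_E, ev_eq_E] at h1
  rw [h1]
  have h2 := congrArg (fun (f : (ℕ →₀ B) →ₗ[ℂ] B) => f (P.mul x y))
    (E_Xop (l • 1 : Module.End ℂ B))
  simp only [LinearMap.comp_apply] at h2
  rw [h2]
  simp

lemma c2 (hP : P.IsPreLie) (x y : B) :
    P.mul x (P.D y) = mapR P.D (P.mul x y) + Xop (P.mul x y) := by
  apply ev_inj'
  intro l
  rw [map_add]
  have h1 := hP.2.2.2.1.2 l x y
  rw [ev_eq_E, ev_eq_E] at h1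
  rw [h1]
  have hcm : P.D ∘ₗ (l • 1 : Module.End ℂ B) = (l • 1 : Module.End ℂ B) ∘ₗ P.D := by
    ext b; simp
  have h2 := congrArg (fun (f : (ℕ →₀ B) →ₗ[ℂ] B) => f (P.mul x y)) (E_mapR hcm)
  have h3 := congrArg (fun (f : (ℕ →₀ B) →ₗ[ℂ] B) => f (P.mul x y))
    (E_Xop (l • 1 : Module.End ℂ B))
  simp only [LinearMap.comp_apply] at h2 h3
  rw [h2, h3]
  simp

lemma c3α (hP : P.IsPreLie) (x y : B) : mapR P.α (P.mul x y) = P.mul (P.α x) (P.α y) := by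
  apply ev_inj'
  intro l
  have h1 := hP.2.2.2.2.1 l x y
  rw [ev_eq_E, ev_eq_E] at h1
  have hcm : P.α ∘ₗ (l • 1 : Module.End ℂ B) = (l • 1 : Module.End ℂ B) ∘ₗ P.α := by
    ext b; simp
  have h2 := congrArg (fun (f : (ℕ →₀ B) →ₗ[ℂ] B) => f (P.mul x y)) (E_mapR hcm)
  simp only [LinearMap.comp_apply] at h2
  rw [h2, h1]

lemma c3β (hP : P.IsPreLie) (x y : B) : mapR P.β (P.mul x y) = P.mul (P.β x) (P.β y) := by
  apply ev_inj'
  intro l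
  have h1 := hP.2.2.2.2.2.1 l x y
  rw [ev_eq_E, ev_eq_E] at h1
  have hcm : P.β ∘ₗ (l • 1 : Module.End ℂ B) = (l • 1 : Module.End ℂ B) ∘ₗ P.β := by
    ext b; simp
  have h2 := congrArg (fun (f : (ℕ →₀ B) →ₗ[ℂ] B) => f (P.mul x y)) (E_mapR hcm)
  simp only [LinearMap.comp_apply] at h2
  rw [h2, h1]

lemma c3α' (hP : P.IsPreLie) (hα1 : α' ∘ₗ P.α = 1) (hα2 : P.α ∘ₗ α' = 1) (x y : B) : mapR α' (P.mul x y) = P.mul (α' x) (α' y) := by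
  have h1 := c3α P hP (α' x) (α' y)
  rw [comp_apply' hα2, comp_apply' hα2] at h1
  have h2 := congrArg (mapR α') h1.symm
  rw [mapR_mapR, hα1, mapR_one] at h2
  exact h2

lemma c3β' (hP : P.IsPreLie) (hβ1 : β' ∘ₗ P.β = 1) (hβ2 : P.β ∘ₗ β' = 1) (x y : B) : mapR β' (P.mul x y) = P.mul (β' x) (β' y) := by
  have h1 := c3β P hP (β' x) (β' y)
  rw [comp_apply' hβ2, comp_apply' hβ2] at h1
  have h2 := congrArg (mapR β') h1.symm
  rw [mapR_mapR, hβ1, mapR_one] at h2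
  exact h2

/-- substitution `λ ↦ λ + m` -/
noncomputable def Sm (m : ℂ) : (ℕ →₀ B) →ₗ[ℂ] (ℕ →₀ B) :=
  subst (Xop + m • LinearMap.id)

lemma E_Sm (T : Module.End ℂ B) (m : ℂ) :
    E T ∘ₗ Sm (B := B) m = E (T + m • 1) := by
  apply E_subst
  apply Finsupp.lhom_ext
  intro n b
  simp only [LinearMap.comp_apply, LinearMap.add_apply, LinearMap.smul_apply,
    LinearMap.id_apply, map_add, map_smul, Xop_single, E_single]
  rw [pow_succ']
  simp

/-- substitution `λ ↦ -∂ - λ` -/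
noncomputable def shD : (ℕ →₀ B) →ₗ[ℂ] (ℕ →₀ B) :=
  subst (-(Xop + mapR P.D))

lemma E_shD (T : Module.End ℂ B) (hTD : P.D ∘ₗ T = T ∘ₗ P.D) :
    E T ∘ₗ shD P = E (-P.D - T) := by
  apply E_subst
  apply Finsupp.lhom_ext
  intro n b
  have hD : P.D ((T ^ n) b) = (T ^ n) (P.D b) := by
    have := congrArg (fun (f : Module.End ℂ B) => f b) (pow_comm_of_comm hTD n)
    simpa using this
  simp only [LinearMap.comp_apply, LinearMap.neg_apply, LinearMap.add_apply,
    map_neg, map_add, Xop_single, mapR_single, E_single, LinearMap.sub_apply]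
  rw [pow_succ']
  simp only [Module.End.mul_apply, hD]
  abel

/-- the commutator bracket -/
noncomputable def Qmap : CMap B B :=
  LinearMap.mk₂ ℂ (fun x y => P.mul x y - shD P (P.mul (α' (P.β y)) (P.α (β' x))))
    (fun x x' y => by simp only [map_add, LinearMap.add_apply]; abel)
    (fun c x y => by simp only [map_smul, LinearMap.smul_apply, smul_sub])
    (fun x y y' => by simp only [map_add, LinearMap.add_apply]; abel)
    (fun c x y => by simp only [map_smul, LinearMap.smul_apply, smul_sub])

lemma Qmap_apply (x y : B) :
    Qmap P α' β' x y = P.mul x y - shD P (P.mul (α' (P.β y)) (P.α (β' x))) :=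
  rfl

lemma hev (l : ℂ) (x y : B) :
    ev (Qmap P α' β') l x y
      = ev P.mul l x y - evD P.D P.mul l (α' (P.β y)) (P.α (β' x)) := by
  rw [ev_eq_E, Qmap_apply, map_sub, ← ev_eq_E]
  have hTD : P.D ∘ₗ (l • 1 : Module.End ℂ B) = (l • 1 : Module.End ℂ B) ∘ₗ P.D := by
    ext b; simp
  have h := congrArg (fun (f : (ℕ →₀ B) →ₗ[ℂ] B) =>
    f (P.mul (α' (P.β y)) (P.α (β' x)))) (E_shD P (l • 1) hTD)
  simp only [LinearMap.comp_apply] at h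
  rw [h, ← evD_eq_E]

lemma hevD (l : ℂ) (x y : B) :
    evD P.D (Qmap P α' β') l x y
      = evD P.D P.mul l x y - ev P.mul l (α' (P.β y)) (P.α (β' x)) := by
  rw [evD_eq_E, Qmap_apply, map_sub, ← evD_eq_E]
  have hTD : P.D ∘ₗ (-P.D - l • 1 : Module.End ℂ B)
      = (-P.D - l • 1 : Module.End ℂ B) ∘ₗ P.D := by
    ext b; simp [map_sub, map_smul]
  have h := congrArg (fun (f : (ℕ →₀ B) →ₗ[ℂ] B) =>
    f (P.mul (α' (P.β y)) (P.α (β' x)))) (E_shD P (-P.D - l • 1) hTD)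
  simp only [LinearMap.comp_apply] at h
  rw [h, sub_sub_cancel, ← ev_eq_E]

lemma G1E (hP : P.IsPreLie) (T : Module.End ℂ B) (u v : B) :
    E T (P.mul (P.D u) v) = - T (E T (P.mul u v)) := by
  rw [c1 P hP, map_neg]
  have h := congrArg (fun (f : (ℕ →₀ B) →ₗ[ℂ] B) => f (P.mul u v)) (E_Xop T)
  simp only [LinearMap.comp_apply] at h
  rw [h]

lemma G2E (hP : P.IsPreLie) (T : Module.End ℂ B) (hTD : P.D ∘ₗ T = T ∘ₗ P.D)
    (u v : B) :
    E T (P.mul u (P.D v)) = P.D (E T (P.mul u v)) + T (E T (P.mul u v)) := by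
  rw [c2 P hP, map_add]
  have h1 := congrArg (fun (f : (ℕ →₀ B) →ₗ[ℂ] B) => f (P.mul u v)) (E_mapR hTD)
  have h2 := congrArg (fun (f : (ℕ →₀ B) →ₗ[ℂ] B) => f (P.mul u v)) (E_Xop T)
  simp only [LinearMap.comp_apply] at h1 h2
  rw [h1, h2]

lemma multE (Φ : Module.End ℂ B)
    (h3 : ∀ x y : B, mapR Φ (P.mul x y) = P.mul (Φ x) (Φ y))
    (T : Module.End ℂ B) (hc : Φ ∘ₗ T = T ∘ₗ Φ) (u v : B) :
    Φ (E T (P.mul u v)) = E T (P.mul (Φ u) (Φ v)) := by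
  rw [← h3]
  have h := congrArg (fun (f : (ℕ →₀ B) →ₗ[ℂ] B) => f (P.mul u v)) (E_mapR hc)
  simp only [LinearMap.comp_apply] at h
  rw [h]

lemma commT {Φ : Module.End ℂ B} (hΦD : Φ ∘ₗ P.D = P.D ∘ₗ Φ) (l : ℂ) :
    Φ ∘ₗ (-P.D - l • 1) = (-P.D - l • (1 : Module.End ℂ B)) ∘ₗ Φ := by
  ext b
  simp only [LinearMap.comp_apply, LinearMap.sub_apply, LinearMap.neg_apply,
    LinearMap.smul_apply, Module.End.one_apply, map_sub, map_neg, map_smul]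
  rw [comm_apply hΦD b]

lemma commS {Φ : Module.End ℂ B} (l : ℂ) :
    Φ ∘ₗ (l • 1) = (l • (1 : Module.End ℂ B)) ∘ₗ Φ := by
  ext b; simp

-- evD sesquilinearity rules
lemma dD1 (hP : P.IsPreLie) (l : ℂ) (u v : B) :
    E (-P.D - l • 1) (P.mul (P.D u) v)
      = P.D (E (-P.D - l • (1 : Module.End ℂ B)) (P.mul u v))
        + l • E (-P.D - l • (1 : Module.End ℂ B)) (P.mul u v) := by
  rw [G1E P hP (-P.D - l • 1) u v]
  simp only [LinearMap.sub_apply, LinearMap.neg_apply, LinearMap.smul_apply,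
    Module.End.one_apply, neg_sub]
  abel

lemma dD2 (hP : P.IsPreLie) (l : ℂ) (u v : B) :
    E (-P.D - l • 1) (P.mul u (P.D v))
      = (-l : ℂ) • E (-P.D - l • (1 : Module.End ℂ B)) (P.mul u v) := by
  rw [G2E P hP (-P.D - l • 1) (commT P rfl l) u v]
  simp only [LinearMap.sub_apply, LinearMap.neg_apply, LinearMap.smul_apply,
    Module.End.one_apply, neg_smul]
  abel


lemma keyA (hP : P.IsPreLie) (l μ : ℂ) (u v w : B) :
    ev P.mul (l + μ) (evD P.D P.mul l u v) w
      = ev P.mul (l + μ) (ev P.mul μ u v) w := by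
  set Θ : B →ₗ[ℂ] B := (E ((l + μ) • 1)).comp (P.mul.flip w) with hΘdef
  have hval : ∀ b : B, Θ b = E ((l + μ) • (1 : Module.End ℂ B)) (P.mul b w) := by
    intro b; simp [hΘdef]
  have hcomm : Θ ∘ₗ (-P.D - l • 1) = (μ • (1 : Module.End ℂ B)) ∘ₗ Θ := by
    ext b
    simp only [LinearMap.comp_apply, LinearMap.sub_apply, LinearMap.neg_apply,
      LinearMap.smul_apply, Module.End.one_apply, map_sub, map_neg, map_smul]
    have hDb : Θ (P.D b) = -((l + μ) • Θ b) := by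
      rw [hval, hval, G1E P hP]
      simp
    rw [hDb, add_smul]
    abel
  have e1 := congrArg (fun (f : (ℕ →₀ B) →ₗ[ℂ] B) => f (P.mul u v)) (E_mapR hcomm)
  have e2 := congrArg (fun (f : (ℕ →₀ B) →ₗ[ℂ] B) => f (P.mul u v))
    (E_mapR (commS (B := B) (Φ := Θ) μ))
  simp only [LinearMap.comp_apply] at e1 e2
  rw [ev_eq_E, ev_eq_E, ev_eq_E, evD_eq_E, ← hval, ← hval, ← e1, ← e2]

lemma keyB (hP : P.IsPreLie) (l μ : ℂ) (u v w : B) :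
    evD P.D P.mul (l + μ) u (evD P.D P.mul l v w)
      = evD P.D P.mul (l + μ) u (ev P.mul μ v w) := by
  set Ξ : B →ₗ[ℂ] B := (E (-P.D - (l + μ) • 1)).comp (P.mul u) with hΞdef
  have hval : ∀ b : B, Ξ b = E (-P.D - (l + μ) • (1 : Module.End ℂ B)) (P.mul u b) := by
    intro b; simp [hΞdef]
  have hcomm : Ξ ∘ₗ (-P.D - l • 1) = (μ • (1 : Module.End ℂ B)) ∘ₗ Ξ := by
    ext b
    simp only [LinearMap.comp_apply, LinearMap.sub_apply, LinearMap.neg_apply,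
      LinearMap.smul_apply, Module.End.one_apply, map_sub, map_neg, map_smul]
    have hDb : Ξ (P.D b) = -((l + μ) • Ξ b) := by
      rw [hval, hval, G2E P hP _ (commT P rfl (l + μ))]
      simp only [LinearMap.sub_apply, LinearMap.neg_apply, LinearMap.smul_apply,
        Module.End.one_apply]
      abel
    rw [hDb, add_smul]
    abel
  have e1 := congrArg (fun (f : (ℕ →₀ B) →ₗ[ℂ] B) => f (P.mul v w)) (E_mapR hcomm)
  have e2 := congrArg (fun (f : (ℕ →₀ B) →ₗ[ℂ] B) => f (P.mul v w))
    (E_mapR (commS (B := B) (Φ := Ξ) μ))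
  simp only [LinearMap.comp_apply] at e1 e2
  rw [evD_eq_E, evD_eq_E, evD_eq_E, ev_eq_E, ← hval, ← hval, ← e1, ← e2]

lemma E_Xpow_apply (T : Module.End ℂ B) (n : ℕ) (v : ℕ →₀ B) :
    E T (((Xop : (ℕ →₀ B) →ₗ[ℂ] (ℕ →₀ B)) ^ n) v) = (T ^ n) (E T v) := by
  have := congrArg (fun (f : (ℕ →₀ B) →ₗ[ℂ] B) => f v)
    (pow_comm_of_comm (E_Xop T) n)
  simpa using this

lemma E_Sm_apply (T : Module.End ℂ B) (m : ℂ) (v : ℕ →₀ B) :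
    E T (Sm (B := B) m v) = E (T + m • 1) v := by
  have := congrArg (fun (f : (ℕ →₀ B) →ₗ[ℂ] B) => f v) (E_Sm T m)
  simpa using this

/-- evaluation of the "nested first-argument" coefficient family -/
lemma EF1gen (T S : Module.End ℂ B) (m : ℂ) (g : ℕ →₀ B) (c' : B)
    (hS : ((E (T + m • 1)).comp (P.mul.flip c')) ∘ₗ S
      = T ∘ₗ ((E (T + m • 1)).comp (P.mul.flip c'))) :
    E T ((Finsupp.lsum ℂ (fun n =>
        (((Xop : (ℕ →₀ B) →ₗ[ℂ] (ℕ →₀ B)) ^ n).comp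
          ((Sm m).comp (P.mul.flip c'))))) g)
      = E (T + m • 1) (P.mul (E S g) c') := by
  rw [E_lsum]
  have hcomp : ∀ n : ℕ, (E T).comp
      ((((Xop : (ℕ →₀ B) →ₗ[ℂ] (ℕ →₀ B)) ^ n).comp ((Sm m).comp (P.mul.flip c'))))
      = (T ^ n) ∘ₗ ((E (T + m • 1)).comp (P.mul.flip c')) := by
    intro n
    ext b
    simp only [LinearMap.comp_apply, LinearMap.flip_apply]
    rw [E_Xpow_apply, E_Sm_apply]
  simp only [hcomp]
  rw [lsum_pow_comm hS g]
  simp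

lemma cPL1 (hP : P.IsPreLie) (m : ℂ) (a b c : B) :
    (Finsupp.lsum ℂ (fun n =>
        (((Xop : (ℕ →₀ B) →ₗ[ℂ] (ℕ →₀ B)) ^ n).comp
          ((Sm m).comp (P.mul.flip (P.β c)))))) (P.mul (P.β a) (P.α b))
      - P.mul (P.α (P.β a)) (ev P.mul m (P.α b) c)
    = Sm m (P.mul (ev P.mul m (P.β b) (P.α a)) (P.β c))
      - mapR ((E (m • 1)).comp (P.mul (P.α (P.β b)))) (P.mul (P.α a) c) := by
  apply ev_inj'
  intro l
  rw [map_sub, map_sub]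
  have h1 := EF1gen P (l • 1) (l • 1) m (P.mul (P.β a) (P.α b)) (P.β c)
    (commS (B := B) l)
  have h3 := E_Sm_apply ((l : ℂ) • (1 : Module.End ℂ B)) m
    (P.mul (ev P.mul m (P.β b) (P.α a)) (P.β c))
  have h4 := congrArg (fun (f : (ℕ →₀ B) →ₗ[ℂ] B) => f (P.mul (P.α a) c))
    (E_mapR (commS (B := B) (Φ := (E ((m : ℂ) • (1 : Module.End ℂ B))).comp
      (P.mul (P.α (P.β b)))) l))
  simp only [LinearMap.comp_apply] at h4
  rw [h1, h3, h4]
  have hPL := hP.2.2.2.2.2.2 l m a b c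
  rw [ev_eq_E, ev_eq_E, ev_eq_E, ev_eq_E, ev_eq_E, ev_eq_E, ev_eq_E, ev_eq_E] at hPL
  rw [add_smul] at hPL
  rw [ev_eq_E, ev_eq_E]
  exact hPL

lemma S1 (hP : P.IsPreLie) (l m : ℂ) (a b c : B) :
    evD P.D P.mul l (evD P.D P.mul m (P.β a) (P.α b)) (P.β c)
      - evD P.D P.mul (l + m) (P.α (P.β a)) (ev P.mul m (P.α b) c)
    = evD P.D P.mul l (ev P.mul m (P.β b) (P.α a)) (P.β c)
      - ev P.mul m (P.α (P.β b)) (evD P.D P.mul l (P.α a) c) := by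
  have hF := cPL1 P hP m a b c
  set T : Module.End ℂ B := -P.D - (l + m) • 1 with hT
  have hTm : T + m • 1 = -P.D - l • (1 : Module.End ℂ B) := by
    rw [hT, add_smul]; abel
  have hS : ((E (T + m • 1)).comp (P.mul.flip (P.β c))) ∘ₗ (-P.D - m • 1)
      = T ∘ₗ ((E (T + m • 1)).comp (P.mul.flip (P.β c))) := by
    rw [hTm]
    ext b'
    simp only [LinearMap.comp_apply, LinearMap.sub_apply, LinearMap.neg_apply,
      LinearMap.smul_apply, Module.End.one_apply, map_sub, map_neg, map_smul,
      LinearMap.flip_apply]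
    rw [dD1 P hP l b' (P.β c), hT]
    simp only [LinearMap.sub_apply, LinearMap.neg_apply, LinearMap.smul_apply,
      Module.End.one_apply, add_smul, LinearMap.add_apply]
    abel
  have hΨ : ((E ((m : ℂ) • (1 : Module.End ℂ B))).comp (P.mul (P.α (P.β b)))) ∘ₗ
        (-P.D - l • 1)
      = T ∘ₗ ((E ((m : ℂ) • (1 : Module.End ℂ B))).comp (P.mul (P.α (P.β b)))) := by
    ext b'
    simp only [LinearMap.comp_apply, LinearMap.sub_apply, LinearMap.neg_apply,
      LinearMap.smul_apply, Module.End.one_apply, map_sub, map_neg, map_smul]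
    rw [G2E P hP ((m : ℂ) • (1 : Module.End ℂ B)) (commS (B := B) (Φ := P.D) m), hT]
    simp only [LinearMap.sub_apply, LinearMap.neg_apply, LinearMap.smul_apply,
      Module.End.one_apply, add_smul, LinearMap.add_apply]
    abel
  have e1 := EF1gen P T (-P.D - m • 1) m (P.mul (P.β a) (P.α b)) (P.β c) hS
  have e3 := E_Sm_apply T m (P.mul (ev P.mul m (P.β b) (P.α a)) (P.β c))
  have e4 := congrArg (fun (f : (ℕ →₀ B) →ₗ[ℂ] B) => f (P.mul (P.α a) c)) (E_mapR hΨ)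
  simp only [LinearMap.comp_apply] at e4
  have key := congrArg (E T) hF
  rw [map_sub, map_sub, e1, e3, e4, hTm] at key
  simp only [ev_eq_E, evD_eq_E] at key ⊢
  rw [hT] at key
  exact key

lemma cPL2 (hP : P.IsPreLie) (l : ℂ) (a b c : B) :
    Sm l (P.mul (ev P.mul l (P.β a) (P.α b)) (P.β c))
      - mapR ((E ((l : ℂ) • (1 : Module.End ℂ B))).comp (P.mul (P.α (P.β a))))
          (P.mul (P.α b) c)
    = (Finsupp.lsum ℂ (fun n =>
        (((Xop : (ℕ →₀ B) →ₗ[ℂ] (ℕ →₀ B)) ^ n).comp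
          ((Sm l).comp (P.mul.flip (P.β c)))))) (P.mul (P.β b) (P.α a))
      - P.mul (P.α (P.β b)) (ev P.mul l (P.α a) c) := by
  apply ev_inj'
  intro μ
  rw [map_sub, map_sub]
  have h1 := E_Sm_apply ((μ : ℂ) • (1 : Module.End ℂ B)) l
    (P.mul (ev P.mul l (P.β a) (P.α b)) (P.β c))
  have h2 := congrArg (fun (f : (ℕ →₀ B) →ₗ[ℂ] B) => f (P.mul (P.α b) c))
    (E_mapR (commS (B := B) (Φ := (E ((l : ℂ) • (1 : Module.End ℂ B))).comp
      (P.mul (P.α (P.β a)))) μ))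
  simp only [LinearMap.comp_apply] at h2
  have h3 := EF1gen P (μ • 1) (μ • 1) l (P.mul (P.β b) (P.α a)) (P.β c)
    (commS (B := B) μ)
  rw [h1, h2, h3]
  have hPL := hP.2.2.2.2.2.2 l μ a b c
  simp only [ev_eq_E, evD_eq_E] at hPL ⊢
  rw [add_smul] at hPL
  have hcomm : (l : ℂ) • (1 : Module.End ℂ B) + μ • 1
      = μ • (1 : Module.End ℂ B) + l • 1 := by abel
  rw [← hcomm]
  exact hPL

lemma S2 (hP : P.IsPreLie) (l m : ℂ) (a b c : B) :
    evD P.D P.mul m (ev P.mul l (P.β a) (P.α b)) (P.β c)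
      - ev P.mul l (P.α (P.β a)) (evD P.D P.mul m (P.α b) c)
    = evD P.D P.mul m (evD P.D P.mul l (P.β b) (P.α a)) (P.β c)
      - evD P.D P.mul (l + m) (P.α (P.β b)) (ev P.mul l (P.α a) c) := by
  have hF := cPL2 P hP l a b c
  set T : Module.End ℂ B := -P.D - (l + m) • 1 with hT
  have hTl : T + l • 1 = -P.D - m • (1 : Module.End ℂ B) := by
    rw [hT, add_smul]; abel
  have hΨ : ((E ((l : ℂ) • (1 : Module.End ℂ B))).comp (P.mul (P.α (P.β a)))) ∘ₗ
        (-P.D - m • 1)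
      = T ∘ₗ ((E ((l : ℂ) • (1 : Module.End ℂ B))).comp (P.mul (P.α (P.β a)))) := by
    ext b'
    simp only [LinearMap.comp_apply, LinearMap.sub_apply, LinearMap.neg_apply,
      LinearMap.smul_apply, Module.End.one_apply, map_sub, map_neg, map_smul]
    rw [G2E P hP ((l : ℂ) • (1 : Module.End ℂ B)) (commS (B := B) (Φ := P.D) l), hT]
    simp only [LinearMap.sub_apply, LinearMap.neg_apply, LinearMap.smul_apply,
      Module.End.one_apply, add_smul, LinearMap.add_apply]
    abel
  have hS : ((E (T + l • 1)).comp (P.mul.flip (P.β c))) ∘ₗ (-P.D - l • 1)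
      = T ∘ₗ ((E (T + l • 1)).comp (P.mul.flip (P.β c))) := by
    rw [hTl]
    ext b'
    simp only [LinearMap.comp_apply, LinearMap.sub_apply, LinearMap.neg_apply,
      LinearMap.smul_apply, Module.End.one_apply, map_sub, map_neg, map_smul,
      LinearMap.flip_apply]
    rw [dD1 P hP m b' (P.β c), hT]
    simp only [LinearMap.sub_apply, LinearMap.neg_apply, LinearMap.smul_apply,
      Module.End.one_apply, add_smul, LinearMap.add_apply]
    abel
  have e1 := E_Sm_apply T l (P.mul (ev P.mul l (P.β a) (P.α b)) (P.β c))
  have e2 := congrArg (fun (f : (ℕ →₀ B) →ₗ[ℂ] B) => f (P.mul (P.α b) c)) (E_mapR hΨ)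
  simp only [LinearMap.comp_apply] at e2
  have e3 := EF1gen P T (-P.D - l • 1) l (P.mul (P.β b) (P.α a)) (P.β c) hS
  have key := congrArg (E T) hF
  rw [map_sub, map_sub, e1, e2, e3, hTl] at key
  simp only [ev_eq_E, evD_eq_E] at key ⊢
  rw [hT] at key
  exact key

lemma ev_sub_left (f : CMap B B) (l : ℂ) (u v w : B) :
    ev f l (u - v) w = ev f l u w - ev f l v w := by
  simp only [ev_eq_E, map_sub, LinearMap.sub_apply]

lemma ev_sub_right (f : CMap B B) (l : ℂ) (u v w : B) :
    ev f l u (v - w) = ev f l u v - ev f l u w := by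
  simp only [ev_eq_E, map_sub, LinearMap.sub_apply]

lemma evD_sub_left (D : Module.End ℂ B) (f : CMap B B) (l : ℂ) (u v w : B) :
    evD D f l (u - v) w = evD D f l u w - evD D f l v w := by
  simp only [evD_eq_E, map_sub, LinearMap.sub_apply]

lemma evD_sub_right (D : Module.End ℂ B) (f : CMap B B) (l : ℂ) (u v w : B) :
    evD D f l u (v - w) = evD D f l u v - evD D f l u w := by
  simp only [evD_eq_E, map_sub, LinearMap.sub_apply]

lemma evD1 (hP : P.IsPreLie) (l : ℂ) (u v : B) :
    evD P.D P.mul l (P.D u) v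
      = P.D (evD P.D P.mul l u v) + l • evD P.D P.mul l u v := by
  simp only [evD_eq_E]; exact dD1 P hP l u v

lemma evD2 (hP : P.IsPreLie) (l : ℂ) (u v : B) :
    evD P.D P.mul l u (P.D v) = -l • evD P.D P.mul l u v := by
  simp only [evD_eq_E]; exact dD2 P hP l u v

end Main


end Stmt9
end ConfAlg
open ConfAlg in
/-- a regular BiHom-preLie conformal algebra gives rise to its
sub-adjacent BiHom-Lie conformal algebra via
`[x_λ y] = x *_λ y − α⁻¹β(y) *_{−∂−λ} αβ⁻¹(x)`. -/
theorem stmt9 {B : Type} [AddCommGroup B] [Module ℂ B]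
    (P : PreLieData B) (hP : P.IsPreLie)
    (α' β' : Module.End ℂ B)
    (hα1 : α' ∘ₗ P.α = 1) (hα2 : P.α ∘ₗ α' = 1)
    (hβ1 : β' ∘ₗ P.β = 1) (hβ2 : P.β ∘ₗ β' = 1) :
    ∃ Q : CMap B B,
      (∀ (l : ℂ) (x y : B),
        ev Q l x y = ev P.mul l x y - evD P.D P.mul l (α' (P.β y)) (P.α (β' x))) ∧
      (LieData.mk P.D Q P.α P.β).IsLie := by
  classical
  refine ⟨Stmt9.Qmap P α' β', Stmt9.hev P α' β', ?_, ?_, ?_, ⟨?_, ?_⟩, ?_, ?_⟩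
  · exact hP.1
  · exact hP.2.1
  · exact hP.2.2.1
  · -- Sesq, first part
    intro l x y
    show ev (Stmt9.Qmap P α' β') l (P.D x) y = (-l) • ev (Stmt9.Qmap P α' β') l x y
    rw [Stmt9.hev, Stmt9.hev]
    have h1 : P.α (β' (P.D x)) = P.D (P.α (β' x)) := by
      rw [Stmt9.comm_apply (Stmt9.hβ'D P β' hP hβ1 hβ2) x, Stmt9.comm_apply hP.1 (β' x)]
    rw [h1, hP.2.2.2.1.1 l x y, Stmt9.evD2 P hP l (α' (P.β y)) (P.α (β' x)), smul_sub]
  · -- Sesq, second part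
    intro l x y
    show ev (Stmt9.Qmap P α' β') l x (P.D y)
      = P.D (ev (Stmt9.Qmap P α' β') l x y) + l • ev (Stmt9.Qmap P α' β') l x y
    rw [Stmt9.hev, Stmt9.hev]
    have h1 : α' (P.β (P.D y)) = P.D (α' (P.β y)) := by
      rw [Stmt9.comm_apply hP.2.1 y, Stmt9.comm_apply (Stmt9.hα'D P α' hP hα1 hα2) (P.β y)]
    rw [h1, hP.2.2.2.1.2 l x y, Stmt9.evD1 P hP l (α' (P.β y)) (P.α (β' x)),
      map_sub, smul_sub]
    abel
  · -- skew-symmetry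
    intro l x y
    show ev (Stmt9.Qmap P α' β') l (P.β x) (P.α y)
      = - evD P.D (Stmt9.Qmap P α' β') l (P.β y) (P.α x)
    rw [Stmt9.hev, Stmt9.hevD]
    have e1 : α' (P.β (P.α y)) = P.β y := by
      rw [show P.β (P.α y) = P.α (P.β y) from (Stmt9.comm_apply hP.2.2.1 y).symm,
        Stmt9.comp_apply' hα1]
    have e2 : P.α (β' (P.β x)) = P.α x := by rw [Stmt9.comp_apply' hβ1]
    have e3 : α' (P.β (P.α x)) = P.β x := by
      rw [show P.β (P.α x) = P.α (P.β x) from (Stmt9.comm_apply hP.2.2.1 x).symm,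
        Stmt9.comp_apply' hα1]
    have e4 : P.α (β' (P.β y)) = P.α y := by rw [Stmt9.comp_apply' hβ1]
    rw [e1, e2, e3, e4, neg_sub]
  · -- Jacobi identity
    intro l μ x y z
    show ev (Stmt9.Qmap P α' β') l (P.α (P.β x)) (ev (Stmt9.Qmap P α' β') μ y z)
      = ev (Stmt9.Qmap P α' β') (l + μ)
          (ev (Stmt9.Qmap P α' β') l (P.β x) y) (P.β z)
        + ev (Stmt9.Qmap P α' β') μ (P.β y) (ev (Stmt9.Qmap P α' β') l (P.α x) z)
    have hcan1 : ∀ b : B, α' (P.α b) = b := Stmt9.comp_apply' hα1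
    have hcan2 : ∀ b : B, P.α (α' b) = b := Stmt9.comp_apply' hα2
    have hcan3 : ∀ b : B, β' (P.β b) = b := Stmt9.comp_apply' hβ1
    have hcan4 : ∀ b : B, P.β (β' b) = b := Stmt9.comp_apply' hβ2
    have hord1 : ∀ b : B, P.β (P.α b) = P.α (P.β b) :=
      fun b => (Stmt9.comm_apply hP.2.2.1 b).symm
    have hord2 : ∀ b : B, P.β (α' b) = α' (P.β b) :=
      fun b => (Stmt9.comm_apply (Stmt9.hα'β P α' hP hα1 hα2) b).symm
    have hord4 : ∀ b : B, β' (P.α b) = P.α (β' b) :=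
      fun b => Stmt9.comm_apply (Stmt9.hβ'α P β' hP hβ1 hβ2) b
    have hord5 : ∀ b : B, β' (α' b) = α' (β' b) :=
      fun b => (Stmt9.comm_apply (Stmt9.hα'β' P α' β' hP hα1 hα2 hβ1 hβ2) b).symm
    have hpα : ∀ (t : ℂ) (u v : B),
        P.α (ev P.mul t u v) = ev P.mul t (P.α u) (P.α v) := hP.2.2.2.2.1
    have hpβ : ∀ (t : ℂ) (u v : B),
        P.β (ev P.mul t u v) = ev P.mul t (P.β u) (P.β v) := hP.2.2.2.2.2.1
    have hpα' : ∀ (t : ℂ) (u v : B),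
        α' (ev P.mul t u v) = ev P.mul t (α' u) (α' v) := fun t u v => by
      rw [Stmt9.ev_eq_E, Stmt9.ev_eq_E]
      exact Stmt9.multE P α' (Stmt9.c3α' P α' hP hα1 hα2) _
        (Stmt9.commS (B := B) (Φ := α') t) u v
    have hpβ' : ∀ (t : ℂ) (u v : B),
        β' (ev P.mul t u v) = ev P.mul t (β' u) (β' v) := fun t u v => by
      rw [Stmt9.ev_eq_E, Stmt9.ev_eq_E]
      exact Stmt9.multE P β' (Stmt9.c3β' P β' hP hβ1 hβ2) _
        (Stmt9.commS (B := B) (Φ := β') t) u v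
    have hdα : ∀ (t : ℂ) (u v : B),
        P.α (evD P.D P.mul t u v) = evD P.D P.mul t (P.α u) (P.α v) := fun t u v => by
      rw [Stmt9.evD_eq_E, Stmt9.evD_eq_E]
      exact Stmt9.multE P P.α (Stmt9.c3α P hP) _ (Stmt9.commT P hP.1 t) u v
    have hdβ : ∀ (t : ℂ) (u v : B),
        P.β (evD P.D P.mul t u v) = evD P.D P.mul t (P.β u) (P.β v) := fun t u v => by
      rw [Stmt9.evD_eq_E, Stmt9.evD_eq_E]
      exact Stmt9.multE P P.β (Stmt9.c3β P hP) _ (Stmt9.commT P hP.2.1 t) u v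
    have hdα' : ∀ (t : ℂ) (u v : B),
        α' (evD P.D P.mul t u v) = evD P.D P.mul t (α' u) (α' v) := fun t u v => by
      rw [Stmt9.evD_eq_E, Stmt9.evD_eq_E]
      exact Stmt9.multE P α' (Stmt9.c3α' P α' hP hα1 hα2) _
        (Stmt9.commT P (Stmt9.hα'D P α' hP hα1 hα2) t) u v
    have hdβ' : ∀ (t : ℂ) (u v : B),
        β' (evD P.D P.mul t u v) = evD P.D P.mul t (β' u) (β' v) := fun t u v => by
      rw [Stmt9.evD_eq_E, Stmt9.evD_eq_E]
      exact Stmt9.multE P β' (Stmt9.c3β' P β' hP hβ1 hβ2) _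
        (Stmt9.commT P (Stmt9.hβ'D P β' hP hβ1 hβ2) t) u v
    have g1 := hP.2.2.2.2.2.2 l μ x (α' y) z
    have ka := Stmt9.keyA P hP l μ (α' (P.β y)) (P.α x) (P.β z)
    have kb := Stmt9.keyB P hP l μ (α' (P.β (P.β z))) y (P.α (P.α (β' x)))
    have s1 := Stmt9.S1 P hP l μ (α' (α' (P.β z))) (α' y) (P.α (P.α (β' x)))
    have s2 := Stmt9.S2 P hP l μ x (α' (α' (P.β z))) (P.α (β' y))
    simp only [Stmt9.hev, map_sub, Stmt9.ev_sub_left, Stmt9.ev_sub_right,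
      Stmt9.evD_sub_left, Stmt9.evD_sub_right, hpα, hpβ, hpα', hpβ', hdα, hdβ,
      hdα', hdβ', hord1, hord2, hord4, hord5, hcan1, hcan2, hcan3, hcan4]
      at g1 ka kb s1 s2 ⊢
    linear_combination (norm := module) -g1 + ka - kb + s1 + s2
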